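/- arXiv:2504.03058 — 2 statements merged into one kernel-verified Lean document; each statement's English description precedes it below -/
import Mathlib

section
/- Let X be a real Banach space, R > 0, χ̄ ∈ X, and let F be a map from X to X that is twice continuously Fréchet differentiable on the closed ball B_R(χ̄) of radius R centered at χ̄. Let A : X → X be an injective bounded linear operator. Suppose there exist constants Y ≥ 0, Z₁ ≥ 0 and Z₂ > 0 such that ‖A(F(χ̄))‖ ≤ Y, ‖A ∘ DF(χ̄) − I‖ ≤ Z₁ (operator norm), and ‖A ∘ D²F(χ)‖ ≤ Z₂ for all χ ∈ B_R(χ̄). If 2·Y·Z₂ ≤ (1 − Z₁)² and Z₁ < 1, then for every r > 0 satisfying (1 − Z₁ − √((1 − Z₁)² − 2·Y·Z₂))/Z₂ ≤ r < min((1 − Z₁)/Z₂, R), there exists a unique χ̃ in the closed ball B_r(χ̄) with F(χ̃) = 0. -/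
open Set Metric ContinuousLinearMap
/-- Second-order Taylor estimate: if the derivative of `f` on a convex set `s` satisfies a
linear bound `‖f' z - f' x‖ ≤ L * ‖z - x‖`, then
`‖f y - f x - f' x (y - x)‖ ≤ L / 2 * ‖y - x‖ ^ 2`. -/
lemma nk_taylor_aux {X G : Type*} [NormedAddCommGroup X] [NormedSpace ℝ X]
    [NormedAddCommGroup G] [NormedSpace ℝ G]
    {s : Set X} (hs : Convex ℝ s) {f : X → G} {f' : X → X →L[ℝ] G}
    (hf : ∀ z ∈ s, HasFDerivWithinAt f (f' z) s z) {L : ℝ} {x y : X}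
    (hx : x ∈ s) (hy : y ∈ s) (hlip : ∀ z ∈ s, ‖f' z - f' x‖ ≤ L * ‖z - x‖) :
    ‖f y - f x - f' x (y - x)‖ ≤ L / 2 * ‖y - x‖ ^ 2 := by
  set g := (AffineMap.lineMap x y : ℝ → X) with hg
  have segm : MapsTo g (Icc (0:ℝ) 1) s := hs.mapsTo_lineMap hx hy
  set φ : ℝ → G := fun t => f (g t) - t • (f' x (y - x)) - f x with hφ
  have hD : ∀ t ∈ Icc (0:ℝ) 1,
      HasDerivWithinAt φ (f' (g t) (y - x) - f' x (y - x)) (Icc 0 1) t := by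
    intro t ht
    have h1 : HasDerivWithinAt (fun t => f (g t)) (f' (g t) (y - x)) (Icc 0 1) t :=
      (hf (g t) (segm ht)).comp_hasDerivWithinAt t
        AffineMap.hasDerivWithinAt_lineMap segm
    have h2 : HasDerivWithinAt (fun t : ℝ => t • (f' x (y - x))) (f' x (y - x)) (Icc 0 1) t := by
      simpa using ((hasDerivAt_id t).smul_const (f' x (y - x))).hasDerivWithinAt
        (s := Icc (0:ℝ) 1)
    simpa [hφ] using (h1.sub h2).sub_const (f x)
  have hcont : ContinuousOn φ (Icc 0 1) := fun t ht => (hD t ht).continuousWithinAt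
  set B : ℝ → ℝ := fun t => L / 2 * ‖y - x‖ ^ 2 * t ^ 2 with hB
  have hB' : ∀ t : ℝ, HasDerivAt B (L * ‖y - x‖ ^ 2 * t) t := by
    intro t
    have := (hasDerivAt_pow 2 t).const_mul (L / 2 * ‖y - x‖ ^ 2)
    exact this.congr_deriv (by ring)
  have key : ∀ t ∈ Icc (0:ℝ) 1, ‖φ t‖ ≤ B t := by
    apply image_norm_le_of_norm_deriv_right_le_deriv_boundary hcont
      (fun t ht => (hD t (Ico_subset_Icc_self ht)).mono_of_mem_nhdsWithin
        (Icc_mem_nhdsGE_of_mem ht))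
      (by simp [hφ, hg, hB]) hB'
    intro t ht
    have hgt : g t - x = t • (y - x) := by
      simp [hg, AffineMap.lineMap_apply]
    have h1 : ‖f' (g t) (y - x) - f' x (y - x)‖ ≤ ‖f' (g t) - f' x‖ * ‖y - x‖ := by
      have := (f' (g t) - f' x).le_opNorm (y - x)
      simpa using this
    have h2 : ‖f' (g t) - f' x‖ ≤ L * (t * ‖y - x‖) := by
      have := hlip (g t) (segm (Ico_subset_Icc_self ht))
      rwa [hgt, norm_smul, Real.norm_of_nonneg ht.1] at this
    calc ‖f' (g t) (y - x) - f' x (y - x)‖ ≤ ‖f' (g t) - f' x‖ * ‖y - x‖ := h1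
      _ ≤ L * (t * ‖y - x‖) * ‖y - x‖ := by
          apply mul_le_mul_of_nonneg_right h2 (norm_nonneg _)
      _ = L * ‖y - x‖ ^ 2 * t := by ring
  have := key 1 (right_mem_Icc.2 zero_le_one)
  have hφ1 : φ 1 = f y - f x - f' x (y - x) := by
    simp [hφ, hg, AffineMap.lineMap_apply_one]
    abel
  rw [hφ1] at this
  simpa [hB] using this

/-- Newton–Kantorovich type theorem (Theorem 2.1 of the paper).
`F` is twice continuously Fréchet differentiable on the closed ball of radius `R`
centered at `χb`, with first derivative `F'` and second derivative `F''` there. -/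
theorem newton_kantorovich
    {X : Type*} [NormedAddCommGroup X] [NormedSpace ℝ X] [CompleteSpace X]
    (R : ℝ) (hR : 0 < R) (χb : X) (F : X → X)
    (F' : X → X →L[ℝ] X) (F'' : X → X →L[ℝ] X →L[ℝ] X)
    (hF' : ∀ χ ∈ Metric.closedBall χb R,
      HasFDerivWithinAt F (F' χ) (Metric.closedBall χb R) χ)
    (hF'' : ∀ χ ∈ Metric.closedBall χb R,
      HasFDerivWithinAt F' (F'' χ) (Metric.closedBall χb R) χ)
    (hF''cont : ContinuousOn F'' (Metric.closedBall χb R))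
    (A : X →L[ℝ] X) (hA : Function.Injective A)
    (Y Z₁ Z₂ : ℝ) (hY : 0 ≤ Y) (hZ₁ : 0 ≤ Z₁) (hZ₂ : 0 < Z₂)
    (hbY : ‖A (F χb)‖ ≤ Y)
    (hbZ₁ : ‖A.comp (F' χb) - ContinuousLinearMap.id ℝ X‖ ≤ Z₁)
    (hbZ₂ : ∀ χ ∈ Metric.closedBall χb R,
      ‖(ContinuousLinearMap.compL ℝ X X X A).comp (F'' χ)‖ ≤ Z₂)
    (hcond₁ : 2 * Y * Z₂ ≤ (1 - Z₁) ^ 2) (hcond₂ : Z₁ < 1)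
    (r : ℝ) (hr₀ : 0 < r)
    (hr₁ : (1 - Z₁ - Real.sqrt ((1 - Z₁) ^ 2 - 2 * Y * Z₂)) / Z₂ ≤ r)
    (hr₂ : r < min ((1 - Z₁) / Z₂) R) :
    ∃! χt : X, χt ∈ Metric.closedBall χb r ∧ F χt = 0 := by
  have hrR : r < R := lt_of_lt_of_le hr₂ (min_le_right _ _)
  have hrZ : Z₂ * r < 1 - Z₁ := by
    have := lt_of_lt_of_le hr₂ (min_le_left _ _)
    rw [lt_div_iff₀ hZ₂] at this; linarith
  -- numeric key inequality
  have hkey : Y + Z₁ * r + Z₂ / 2 * r ^ 2 ≤ r := by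
    set s := Real.sqrt ((1 - Z₁) ^ 2 - 2 * Y * Z₂) with hs
    have hs0 : 0 ≤ s := Real.sqrt_nonneg _
    have hs2 : s ^ 2 = (1 - Z₁) ^ 2 - 2 * Y * Z₂ :=
      Real.sq_sqrt (by linarith)
    have h1 : 1 - Z₁ - s ≤ Z₂ * r := by
      rw [div_le_iff₀ hZ₂] at hr₁; linarith
    have ha : 0 ≤ Z₂ * r - (1 - Z₁) + s := by linarith
    have hb : 0 ≤ (1 - Z₁) + s - Z₂ * r := by linarith
    nlinarith [mul_nonneg ha hb, hZ₂.le, hr₀.le]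
  -- notation
  set BR := Metric.closedBall χb R with hBR
  set Br := Metric.closedBall χb r with hBr
  have hsub : Br ⊆ BR := Metric.closedBall_subset_closedBall hrR.le
  have hχbR : χb ∈ BR := Metric.mem_closedBall_self hR.le
  have hχbr : χb ∈ Br := Metric.mem_closedBall_self hr₀.le
  set T : X → X := fun x => x - A (F x) with hT
  set G : X → X →L[ℝ] X := fun χ => A.comp (F' χ) with hG
  set T' : X → X →L[ℝ] X := fun χ => ContinuousLinearMap.id ℝ X - G χ with hT'
  -- derivative of G
  have hGderiv : ∀ χ ∈ BR, HasFDerivWithinAt G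
      ((ContinuousLinearMap.compL ℝ X X X A).comp (F'' χ)) BR χ := by
    intro χ hχ
    exact (ContinuousLinearMap.compL ℝ X X X A).hasFDerivAt.comp_hasFDerivWithinAt χ
      (hF'' χ hχ)
  -- G is Z₂-Lipschitz on BR
  have hGlip : ∀ x ∈ BR, ∀ y ∈ BR, ‖G y - G x‖ ≤ Z₂ * ‖y - x‖ := fun x hx y hy =>
    (convex_closedBall χb R).norm_image_sub_le_of_norm_hasFDerivWithin_le
      hGderiv hbZ₂ hx hy
  -- derivative of T
  have hTderiv : ∀ χ ∈ BR, HasFDerivWithinAt T (T' χ) BR χ := by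
    intro χ hχ
    exact (hasFDerivWithinAt_id χ BR).sub
      (A.hasFDerivAt.comp_hasFDerivWithinAt χ (hF' χ hχ))
  -- bound on T' on Br
  have hT'bound : ∀ χ ∈ Br, ‖T' χ‖ ≤ Z₁ + Z₂ * r := by
    intro χ hχ
    have h1 : T' χ = -((G χb - ContinuousLinearMap.id ℝ X) + (G χ - G χb)) := by
      simp [hT']; try abel
    have h2 : ‖G χ - G χb‖ ≤ Z₂ * r := by
      refine (hGlip χb hχbR χ (hsub hχ)).trans ?_
      have : ‖χ - χb‖ ≤ r := by
        rw [← dist_eq_norm]; exact hχ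
      nlinarith
    calc ‖T' χ‖ = ‖(G χb - ContinuousLinearMap.id ℝ X) + (G χ - G χb)‖ := by
          rw [h1, norm_neg]
      _ ≤ ‖G χb - ContinuousLinearMap.id ℝ X‖ + ‖G χ - G χb‖ := norm_add_le _ _
      _ ≤ Z₁ + Z₂ * r := add_le_add hbZ₁ h2
  -- Taylor estimate for T at χb on Br
  have htaylor : ∀ y ∈ Br, ‖T y - T χb - T' χb (y - χb)‖ ≤ Z₂ / 2 * ‖y - χb‖ ^ 2 := by
    intro y hy
    apply nk_taylor_aux (convex_closedBall χb r)
      (fun z hz => (hTderiv z (hsub hz)).mono hsub) hχbr hy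
    intro z hz
    have : T' z - T' χb = -(G z - G χb) := by simp [hT']; try abel
    rw [this, norm_neg]
    exact hGlip χb hχbR z (hsub hz)
  -- T maps Br to Br
  have hmaps : MapsTo T Br Br := by
    intro y hy
    have hyr : ‖y - χb‖ ≤ r := by rw [← dist_eq_norm]; exact hy
    have h0 : ‖T χb - χb‖ ≤ Y := by
      have : T χb - χb = -(A (F χb)) := by simp [hT]
      rw [this, norm_neg]; exact hbY
    have h1 : ‖T' χb (y - χb)‖ ≤ Z₁ * r := by
      have e : T' χb = -(A.comp (F' χb) - ContinuousLinearMap.id ℝ X) := by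
        simp [hT', hG]
      have := (T' χb).le_opNorm (y - χb)
      have hn : ‖T' χb‖ ≤ Z₁ := by rw [e, norm_neg]; exact hbZ₁
      calc ‖T' χb (y - χb)‖ ≤ ‖T' χb‖ * ‖y - χb‖ := (T' χb).le_opNorm _
        _ ≤ Z₁ * r := mul_le_mul hn hyr (norm_nonneg _) hZ₁
    have h2 : ‖T y - T χb - T' χb (y - χb)‖ ≤ Z₂ / 2 * r ^ 2 := by
      refine (htaylor y hy).trans ?_
      have : ‖y - χb‖ ^ 2 ≤ r ^ 2 := by nlinarith [norm_nonneg (y - χb)]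
      nlinarith
    have : ‖T y - χb‖ ≤ Y + Z₁ * r + Z₂ / 2 * r ^ 2 := by
      have e : T y - χb = (T y - T χb - T' χb (y - χb)) + T' χb (y - χb) + (T χb - χb) := by
        abel
      rw [e]
      calc ‖_ + _ + _‖ ≤ ‖(T y - T χb - T' χb (y - χb)) + T' χb (y - χb)‖ + ‖T χb - χb‖ :=
            norm_add_le _ _
        _ ≤ ‖T y - T χb - T' χb (y - χb)‖ + ‖T' χb (y - χb)‖ + ‖T χb - χb‖ := by
            gcongr; exact norm_add_le _ _
        _ ≤ Z₂ / 2 * r ^ 2 + Z₁ * r + Y := by gcongr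
        _ = Y + Z₁ * r + Z₂ / 2 * r ^ 2 := by ring
    show T y ∈ Br
    rw [hBr, Metric.mem_closedBall, dist_eq_norm]
    linarith
  -- T is Lipschitz on Br with constant K
  set K : ℝ := Z₁ + Z₂ * r with hK
  have hK0 : 0 ≤ K := by positivity
  have hK1 : K < 1 := by linarith
  have hTlip : ∀ x ∈ Br, ∀ y ∈ Br, ‖T y - T x‖ ≤ K * ‖y - x‖ := fun x hx y hy =>
    (convex_closedBall χb r).norm_image_sub_le_of_norm_hasFDerivWithin_le
      (fun z hz => (hTderiv z (hsub hz)).mono hsub) hT'bound hx hy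
  -- fixed point setup on the subtype
  haveI : Nonempty Br := ⟨⟨χb, hχbr⟩⟩
  haveI : CompleteSpace Br := (Metric.isClosed_closedBall (x := χb) (ε := r)).completeSpace_coe
  set Tr : Br → Br := fun x => ⟨T x, hmaps x.2⟩ with hTr
  have hcontr : ContractingWith K.toNNReal Tr := by
    constructor
    · rwa [← NNReal.coe_lt_one, Real.coe_toNNReal _ hK0]
    · rw [lipschitzWith_iff_dist_le_mul]
      intro a b
      rw [Subtype.dist_eq, Subtype.dist_eq, hTr]
      simp only [dist_eq_norm]
      rw [Real.coe_toNNReal _ hK0]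
      exact hTlip b b.2 a a.2
  set χt : Br := hcontr.fixedPoint Tr with hχt
  have hfix : T (χt : X) = χt := congrArg Subtype.val (hcontr.fixedPoint_isFixedPt)
  -- fixed point iff zero
  have hiff : ∀ x : X, T x = x ↔ F x = 0 := by
    intro x
    constructor
    · intro h
      have : A (F x) = 0 := by
        have : x - A (F x) = x := h
        have := sub_eq_self.mp this
        exact this
      have : A (F x) = A 0 := by simpa using this
      exact hA this
    · intro h; simp [hT, h]
  refine ⟨(χt : X), ⟨χt.2, (hiff _).mp hfix⟩, ?_⟩
  rintro y ⟨hy, hFy⟩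
  have : Tr ⟨y, hy⟩ = ⟨y, hy⟩ := by
    apply Subtype.ext
    exact (hiff y).mpr hFy
  have := hcontr.fixedPoint_unique this
  exact congrArg Subtype.val this
end

section
/- Let ν > 1, N ∈ ℕ, r > 0, and let (a_n)_{n≥0}, (b_n)_{n≥0} be real sequences such that ∑_{n≥0} |a_n|·ν^n < ∞, b_n = 0 for all n > N, and ∑_{n≥0} |a_n − b_n|·ν^n ≤ r. Then for every θ ∈ (0, π): |∑_{n≥1} n·a_n·sin(n·θ) − ∑_{n=1}^{N} n·b_n·sin(n·θ)| ≤ r·( ∑_{n=1}^{N} n·|sin(n·θ)| + ((ν − 1)·N + ν) / ((ν − 1)²·ν^N) ). -/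
/-- Lemma 3.5 of the paper (tail estimate, inequality (69)): if the true
Chebyshev coefficients `a` are within weighted `ℓ¹` distance `r` of the
polynomial coefficients `b` (supported on degrees `≤ N`), then the derivative
series is controlled. -/
theorem chebyshev_deriv_tail_estimate
    (ν : ℝ) (hν : 1 < ν) (N : ℕ) (r : ℝ) (hr : 0 < r)
    (a b : ℕ → ℝ)
    (ha : Summable fun n : ℕ => |a n| * ν ^ n)
    (hbN : ∀ n : ℕ, N < n → b n = 0)
    (hab : ∑' n : ℕ, |a n - b n| * ν ^ n ≤ r)
    (θ : ℝ) (hθ : θ ∈ Set.Ioo (0 : ℝ) Real.pi) :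
    |(∑' n : ℕ, ((n : ℝ) + 1) * a (n + 1) * Real.sin (((n : ℝ) + 1) * θ))
        - ∑ n ∈ Finset.Icc 1 N, (n : ℝ) * b n * Real.sin ((n : ℝ) * θ)|
      ≤ r * ((∑ n ∈ Finset.Icc 1 N, (n : ℝ) * |Real.sin ((n : ℝ) * θ)|)
          + ((ν - 1) * N + ν) / ((ν - 1) ^ 2 * ν ^ N)) := by
  have hν0 : (0:ℝ) < ν := lt_trans one_pos hν
  set x : ℝ := ν⁻¹ with hxdef
  have hx0 : 0 < x := inv_pos.mpr hν0
  have hx1 : x < 1 := inv_lt_one_of_one_lt₀ hν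
  have hxν : ∀ n : ℕ, ν ^ n * x ^ n = 1 := by
    intro n
    rw [← mul_pow, mul_inv_cancel₀ (ne_of_gt hν0), one_pow]
  set c : ℕ → ℝ := fun n => a n - b n with hcdef
  -- summability of |c n| * ν ^ n
  have hb_sum : Summable (fun n => |b n| * ν ^ n) := by
    apply summable_of_ne_finset_zero (s := Finset.range (N+1))
    intro n hn
    simp only [Finset.mem_range, not_lt] at hn
    rw [hbN n (by omega)]; simp
  have hcsum : Summable (fun n => |c n| * ν ^ n) := by
    apply Summable.of_nonneg_of_le (fun n => by positivity) (fun n => ?_) (ha.add hb_sum)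
    have h1 : |c n| ≤ |a n| + |b n| := abs_sub _ _
    have h2 : (0:ℝ) ≤ ν ^ n := by positivity
    calc |c n| * ν ^ n ≤ (|a n| + |b n|) * ν ^ n := by nlinarith
      _ = |a n| * ν ^ n + |b n| * ν ^ n := by ring
  -- pointwise bound
  have hcb : ∀ n, |c n| ≤ r * x ^ n := by
    intro n
    have h1 : |c n| * ν ^ n ≤ r :=
      le_trans (Summable.le_tsum hcsum n (fun m _ => by positivity)) hab
    have h2 : (0:ℝ) ≤ x ^ n := by positivity
    calc |c n| = |c n| * ν ^ n * x ^ n := by rw [mul_assoc, hxν n, mul_one]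
      _ ≤ r * x ^ n := mul_le_mul_of_nonneg_right h1 h2
  -- main functions
  set F : ℕ → ℝ := fun n => ((n:ℝ)+1) * c (n+1) * Real.sin (((n:ℝ)+1) * θ) with hFdef
  set G : ℕ → ℝ := fun n => ((n:ℝ)+1) * b (n+1) * Real.sin (((n:ℝ)+1) * θ) with hGdef
  -- majorant
  have hMsum : Summable (fun n : ℕ => r * (((n:ℝ)+1) * x ^ (n+1))) := by
    have h0 : Summable (fun n : ℕ => (n:ℝ)^1 * x ^ n) :=
      summable_pow_mul_geometric_of_norm_lt_one 1 (by rwa [Real.norm_eq_abs, abs_of_pos hx0])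
    have h1 : Summable (fun n : ℕ => ((n+1:ℕ):ℝ)^1 * x ^ (n+1)) := by
      exact (summable_nat_add_iff (f := fun n : ℕ => (n:ℝ)^1 * x ^ n) 1).mpr h0
    apply Summable.mul_left
    apply h1.congr
    intro n; push_cast; ring
  have hFbound : ∀ n, |F n| ≤ r * (((n:ℝ)+1) * x ^ (n+1)) := by
    intro n
    have h1 : |Real.sin (((n:ℝ)+1) * θ)| ≤ 1 := Real.abs_sin_le_one _
    have h2 : |c (n+1)| ≤ r * x ^ (n+1) := hcb (n+1)
    have hn0 : (0:ℝ) ≤ (n:ℝ)+1 := by positivity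
    have habs : |F n| = ((n:ℝ)+1) * |c (n+1)| * |Real.sin (((n:ℝ)+1) * θ)| := by
      rw [hFdef]; simp [abs_mul, abs_of_nonneg hn0]
    rw [habs]
    have hcn : (0:ℝ) ≤ |c (n+1)| := abs_nonneg _
    have key : |c (n+1)| * |Real.sin (((n:ℝ)+1) * θ)| ≤ r * x ^ (n+1) :=
      le_trans (mul_le_of_le_one_right hcn h1) h2
    calc ((n:ℝ)+1) * |c (n+1)| * |Real.sin (((n:ℝ)+1) * θ)|
        = ((n:ℝ)+1) * (|c (n+1)| * |Real.sin (((n:ℝ)+1) * θ)|) := by ring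
      _ ≤ ((n:ℝ)+1) * (r * x ^ (n+1)) := mul_le_mul_of_nonneg_left key hn0
      _ = r * (((n:ℝ)+1) * x ^ (n+1)) := by ring
  have hFabs : Summable (fun n => |F n|) :=
    Summable.of_nonneg_of_le (fun n => abs_nonneg _) hFbound hMsum
  have hFsum : Summable F := by rwa [summable_abs_iff] at hFabs
  have hGsum : Summable G := by
    apply summable_of_ne_finset_zero (s := Finset.range N)
    intro n hn
    simp only [Finset.mem_range, not_lt] at hn
    rw [hGdef]; simp [hbN (n+1) (by omega)]
  -- the a-series is F + G
  have hA : (fun n : ℕ => ((n:ℝ)+1) * a (n+1) * Real.sin (((n:ℝ)+1) * θ)) = fun n => F n + G n := by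
    funext n
    rw [hFdef, hGdef, hcdef]
    ring
  -- tsum G equals the finite sum
  have hGfin : ∑' n, G n = ∑ n ∈ Finset.Icc 1 N, (n:ℝ) * b n * Real.sin ((n:ℝ) * θ) := by
    rw [tsum_eq_sum (s := Finset.range N) (fun n hn => by
      simp only [Finset.mem_range, not_lt] at hn
      rw [hGdef]; simp [hbN (n+1) (by omega)])]
    rw [show Finset.Icc 1 N = Finset.Ico 1 (N+1) by rfl, Finset.sum_Ico_eq_sum_range]
    simp only [Nat.add_sub_cancel]
    apply Finset.sum_congr rfl
    intro i _
    rw [hGdef]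
    push_cast
    ring_nf
  -- reduce LHS to |∑' F|
  have hLHS : (∑' n : ℕ, ((n:ℝ)+1) * a (n+1) * Real.sin (((n:ℝ)+1) * θ))
      - ∑ n ∈ Finset.Icc 1 N, (n:ℝ) * b n * Real.sin ((n:ℝ) * θ) = ∑' n, F n := by
    rw [hA, Summable.tsum_add hFsum hGsum, hGfin]
    ring
  rw [hLHS]
  -- bound |∑' F| ≤ ∑' |F|
  have hFnorm : Summable (fun n => ‖F n‖) := by
    simpa only [Real.norm_eq_abs] using hFabs
  have h1 : |∑' n, F n| ≤ ∑' n, |F n| := by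
    have := norm_tsum_le_tsum_norm hFnorm
    simpa only [Real.norm_eq_abs] using this
  refine le_trans h1 ?_
  -- split
  rw [← Summable.sum_add_tsum_nat_add N hFabs]
  have hpart1 : ∑ i ∈ Finset.range N, |F i|
      ≤ r * ∑ n ∈ Finset.Icc 1 N, (n:ℝ) * |Real.sin ((n:ℝ) * θ)| := by
    rw [show Finset.Icc 1 N = Finset.Ico 1 (N+1) by rfl, Finset.sum_Ico_eq_sum_range,
      Nat.add_sub_cancel, Finset.mul_sum]
    apply Finset.sum_le_sum
    intro i _
    have h2 : |F i| ≤ r * (((i:ℝ)+1) * x ^ (i+1)) := hFbound i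
    have h3 : x ^ (i+1) ≤ 1 := pow_le_one₀ hx0.le hx1.le
    have habs : |F i| = ((i:ℝ)+1) * |c (i+1)| * |Real.sin (((i:ℝ)+1) * θ)| := by
      rw [hFdef]; simp [abs_mul, abs_of_nonneg (by positivity : (0:ℝ) ≤ (i:ℝ)+1)]
    have hc1 : |c (i+1)| ≤ r := le_trans (hcb (i+1)) (by nlinarith)
    have key : |c (i+1)| * |Real.sin (((i:ℝ)+1) * θ)| ≤ r * |Real.sin (((i:ℝ)+1) * θ)| :=
      mul_le_mul_of_nonneg_right hc1 (abs_nonneg _)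
    have hi0 : (0:ℝ) ≤ (i:ℝ)+1 := by positivity
    have : ((i:ℝ)+1) * |c (i+1)| * |Real.sin (((i:ℝ)+1) * θ)|
        ≤ r * (((1+i:ℕ):ℝ) * |Real.sin (((1+i:ℕ):ℝ) * θ)|) := by
      push_cast
      rw [show ((1:ℝ)+i) = (i:ℝ)+1 by ring]
      calc ((i:ℝ)+1) * |c (i+1)| * |Real.sin (((i:ℝ)+1) * θ)|
          = ((i:ℝ)+1) * (|c (i+1)| * |Real.sin (((i:ℝ)+1) * θ)|) := by ring
        _ ≤ ((i:ℝ)+1) * (r * |Real.sin (((i:ℝ)+1) * θ)|) := mul_le_mul_of_nonneg_left key hi0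
        _ = r * (((i:ℝ)+1) * |Real.sin (((i:ℝ)+1) * θ)|) := by ring
    linarith [habs ▸ this]
  -- tail
  have hxne : (1:ℝ) - x ≠ 0 := by linarith
  have hgeo : ∑' n : ℕ, x ^ n = (1-x)⁻¹ := tsum_geometric_of_lt_one hx0.le hx1
  have hngeo : ∑' n : ℕ, (n:ℝ) * x ^ n = x/(1-x)^2 :=
    tsum_coe_mul_geometric_of_norm_lt_one (by rwa [Real.norm_eq_abs, abs_of_pos hx0])
  have hgeosum : Summable (fun n : ℕ => x ^ n) := summable_geometric_of_lt_one hx0.le hx1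
  have hngeosum : Summable (fun n : ℕ => (n:ℝ) * x ^ n) := by
    have h0 : Summable (fun n : ℕ => (n:ℝ)^1 * x ^ n) :=
      summable_pow_mul_geometric_of_norm_lt_one 1 (by rwa [Real.norm_eq_abs, abs_of_pos hx0])
    apply h0.congr; intro n; simp
  have htail : ∑' i : ℕ, r * (((i+N:ℕ):ℝ)+1) * x ^ (i+N+1)
      = r * (((ν-1)*N + ν)/((ν-1)^2 * ν^N)) := by
    have hterm : ∀ i : ℕ, r * (((i+N:ℕ):ℝ)+1) * x ^ (i+N+1)
        = (r * x^(N+1)) * ((i:ℝ) * x ^ i) + (r * (((N:ℝ)+1) * x^(N+1))) * x ^ i := by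
      intro i
      push_cast
      rw [pow_add, pow_add]
      ring
    rw [tsum_congr hterm, Summable.tsum_add ((hngeosum.mul_left _)) ((hgeosum.mul_left _)),
      tsum_mul_left, tsum_mul_left, hngeo, hgeo]
    have hν1 : ν - 1 ≠ 0 := by linarith
    have hνne : ν ≠ 0 := ne_of_gt hν0
    rw [hxdef]
    simp only [inv_pow]
    field_simp
    ring
  have hpart2 : ∑' i : ℕ, |F (i + N)| ≤ r * (((ν-1)*N + ν)/((ν-1)^2 * ν^N)) := by
    rw [← htail]
    have hMsum' : Summable (fun n : ℕ => r * ((n:ℝ)+1) * x ^ (n+1)) :=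
      hMsum.congr (fun n => by ring)
    have hshift : Summable (fun i : ℕ => r * (((i+N:ℕ):ℝ)+1) * x ^ ((i+N)+1)) :=
      (summable_nat_add_iff (f := fun n : ℕ => r * ((n:ℝ)+1) * x ^ (n+1)) N).mpr hMsum'
    apply Summable.tsum_le_tsum _ (hFabs.comp_injective (add_left_injective N)) hshift
    intro i
    have := hFbound (i + N)
    calc |F (i+N)| ≤ r * ((((i+N:ℕ):ℝ))+1) * x ^ (i+N+1) := by push_cast at this ⊢; linarith
      _ = r * (((i+N:ℕ):ℝ)+1) * x ^ (i+N+1) := by ring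
  calc ∑ i ∈ Finset.range N, |F i| + ∑' i, |F (i+N)|
      ≤ r * (∑ n ∈ Finset.Icc 1 N, (n:ℝ) * |Real.sin ((n:ℝ) * θ)|)
        + r * (((ν-1)*N + ν)/((ν-1)^2 * ν^N)) := add_le_add hpart1 hpart2
    _ = r * ((∑ n ∈ Finset.Icc 1 N, (n:ℝ) * |Real.sin ((n:ℝ) * θ)|)
        + ((ν-1)*N + ν)/((ν-1)^2 * ν^N)) := by ring
end
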